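/- Let a ≥ 0 and q have first moment m₁ < ∞. Let (Y_n^{(k)}) be the rescaled generalized DR process with Y_{n+1}^{(k)} = (Y_n^{(k)} + k^{−1}η_n (G_n^{(k)})^{−1}(U_n) − k^{−1})₊ where η_n is Bernoulli(a/k). If sup_k E[(Y₀^{(k)})²] < ∞, then for every t ≥ 0, E[Y_{⌊kt⌋}^{(k)}] ≤ e^{a m₁ t} E[Y₀^{(k)}]. -/

import Mathlib

open MeasureTheory ProbabilityTheory Filter
open scoped ENNReal NNReal

noncomputable section

/-- Truncated Euclidean cost `ρ(x,y) = min(1, |x-y|)` on `ℝ≥0`. -/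
def rho (x y : ℝ≥0) : ℝ := min 1 |(x : ℝ) - (y : ℝ)|

/-- `π` is a coupling of `μ` and `ν`. -/
def IsCoupling (π : Measure (ℝ≥0 × ℝ≥0)) (μ ν : Measure ℝ≥0) : Prop :=
  π.map Prod.fst = μ ∧ π.map Prod.snd = ν

/-- Wasserstein distance for the truncated cost. -/
def W (μ ν : Measure ℝ≥0) : ℝ :=
  sInf { r : ℝ | ∃ π : Measure (ℝ≥0 × ℝ≥0),
    IsProbabilityMeasure π ∧ IsCoupling π μ ν ∧ r = ∫ p, rho p.1 p.2 ∂π }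

/-- Convolution of two measures on `ℝ≥0`. -/
def conv (μ ν : Measure ℝ≥0) : Measure ℝ≥0 :=
  (μ.prod ν).map (fun p => p.1 + p.2)

/-- `k`-fold convolution power (`convPow μ 0 = δ₀`). -/
def convPow (μ : Measure ℝ≥0) : ℕ → Measure ℝ≥0
  | 0 => Measure.dirac 0
  | n + 1 => conv (convPow μ n) μ

/-- The `q`-mixture `μ^q = ∑_{k≥1} q_k μ^{*k}` (`q k` = weight of `k`). -/
def qMix (q : ℕ → ℝ≥0) (μ : Measure ℝ≥0) : Measure ℝ≥0 :=
  Measure.sum (fun k => ((q (k + 1) : ℝ≥0∞)) • convPow μ (k + 1))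

/-- Total variation norm of the difference of two finite measures. -/
def tvDist (μ ν : Measure ℝ≥0) : ℝ :=
  sSup { r : ℝ | ∃ s : Set ℝ≥0, MeasurableSet s ∧
    r = |(μ s).toReal - (ν s).toReal| + |(μ sᶜ).toReal - (ν sᶜ).toReal| }

instance conv_prob (μ ν : Measure ℝ≥0) [IsProbabilityMeasure μ] [IsProbabilityMeasure ν] :
    IsProbabilityMeasure (conv μ ν) :=
  Measure.isProbabilityMeasure_map (measurable_add).aemeasurable

instance convPow_prob (μ : Measure ℝ≥0) [IsProbabilityMeasure μ] (n : ℕ) :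
    IsProbabilityMeasure (convPow μ n) := by
  induction n with
  | zero => exact Measure.dirac.isProbabilityMeasure
  | succ n ih => exact conv_prob _ _

lemma lint_conv (μ ν : Measure ℝ≥0) [IsProbabilityMeasure μ] [IsProbabilityMeasure ν] :
    ∫⁻ x, (x : ℝ≥0∞) ∂(conv μ ν) = (∫⁻ x, (x : ℝ≥0∞) ∂μ) + ∫⁻ x, (x : ℝ≥0∞) ∂ν := by
  rw [conv, lintegral_map measurable_coe_nnreal_ennreal measurable_add]
  have : ∀ p : ℝ≥0 × ℝ≥0, ((p.1 + p.2 : ℝ≥0) : ℝ≥0∞) = (p.1 : ℝ≥0∞) + (p.2 : ℝ≥0∞) := by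
    intro p; push_cast; ring
  simp_rw [this]
  have h1 : Measurable fun p : ℝ≥0 × ℝ≥0 => (p.1 : ℝ≥0∞) :=
    measurable_fst.coe_nnreal_ennreal
  have h2 : Measurable fun p : ℝ≥0 × ℝ≥0 => (p.2 : ℝ≥0∞) :=
    measurable_snd.coe_nnreal_ennreal
  rw [lintegral_add_left h1]
  rw [lintegral_prod _ h1.aemeasurable, lintegral_prod _ h2.aemeasurable]
  simp [lintegral_const]

lemma lint_convPow (μ : Measure ℝ≥0) [IsProbabilityMeasure μ] (n : ℕ) :
    ∫⁻ x, (x : ℝ≥0∞) ∂(convPow μ n) = n * ∫⁻ x, (x : ℝ≥0∞) ∂μ := by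
  induction n with
  | zero => simp [convPow, lintegral_dirac]
  | succ n ih =>
      rw [convPow, lint_conv, ih]
      push_cast; ring

lemma lint_qMix (q : ℕ → ℝ≥0) (μ : Measure ℝ≥0) [IsProbabilityMeasure μ] :
    ∫⁻ x, (x : ℝ≥0∞) ∂(qMix q μ) = (∑' j : ℕ, (j : ℝ≥0∞) * q j) * ∫⁻ x, (x : ℝ≥0∞) ∂μ := by
  rw [qMix, lintegral_sum_measure]
  simp_rw [lintegral_smul_measure, lint_convPow]
  set I : ℝ≥0∞ := ∫⁻ x, (x : ℝ≥0∞) ∂μ with hI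
  have hshift : (∑' j : ℕ, (j : ℝ≥0∞) * q j)
      = ∑' j : ℕ, ((j + 1 : ℕ) : ℝ≥0∞) * q (j + 1) := by
    rw [tsum_eq_zero_add' (f := fun j : ℕ => (j : ℝ≥0∞) * q j) ENNReal.summable]
    simp
  rw [hshift, ← ENNReal.tsum_mul_right]
  congr 1; funext j; push_cast; ring

/-- First-moment bound for the rescaled generalized DR processes:
`E[Y^{(k)}_{⌊kt⌋}] ≤ e^{a m₁ t} E[Y^{(k)}_0]`. -/
theorem rescaled_firstMoment_bound
    {Ω : Type*} {mΩ : MeasurableSpace Ω} (P : Measure Ω) [IsProbabilityMeasure P]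
    (a m₁ : ℝ) (ha : 0 ≤ a)
    (q : ℕ → ℝ≥0) (hq0 : q 0 = 0) (hq1 : ∑' j, q j = 1)
    (hm₁ : HasSum (fun j : ℕ => (j : ℝ) * (q j : ℝ)) m₁)
    (Y η Z : ℕ → ℕ → Ω → ℝ≥0)
    (hYmeas : ∀ k n, Measurable (Y k n)) (hηmeas : ∀ k n, Measurable (η k n))
    (hZmeas : ∀ k n, Measurable (Z k n))
    (hrec : ∀ k n ω, Y k (n + 1) ω
      = Y k n ω + ((k : ℝ≥0))⁻¹ * η k n ω * Z k n ω - ((k : ℝ≥0))⁻¹)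
    (hZlaw : ∀ k n, P.map (Z k n) = qMix q (P.map (Y k n)))
    (hη01 : ∀ k n ω, η k n ω = 0 ∨ η k n ω = 1)
    (hηlaw : ∀ k n, 1 ≤ k → P {ω | η k n ω = 1} = ENNReal.ofReal (a / k))
    (hindep : ∀ k n, IndepFun (fun ω => (η k n ω, Z k n ω)) (Y k n) P)
    (hηZ : ∀ k n, IndepFun (η k n) (Z k n) P)
    (hmom : ∃ C : ℝ, ∀ k, ∫ ω, ((Y k 0 ω : ℝ)) ^ 2 ∂P ≤ C)
    (hint : ∀ k, Integrable (fun ω => ((Y k 0 ω : ℝ)) ^ 2) P) :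
    ∀ k : ℕ, 1 ≤ k → a ≤ (k : ℝ) → ∀ t : ℝ, 0 ≤ t →
      ∫ ω, (Y k (Nat.floor ((k : ℝ) * t)) ω : ℝ) ∂P
        ≤ Real.exp (a * m₁ * t) * ∫ ω, (Y k 0 ω : ℝ) ∂P := by
  intro k hk hak t ht
  have hm₁nonneg : 0 ≤ m₁ := hm₁.nonneg (fun j => by positivity)
  have hkR : (1 : ℝ) ≤ (k : ℝ) := by exact_mod_cast hk
  have hkpos : (0 : ℝ) < (k : ℝ) := lt_of_lt_of_le one_pos hkR
  set L : ℕ → ℝ≥0∞ := fun n => ∫⁻ ω, (Y k n ω : ℝ≥0∞) ∂P with hL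
  -- moment identity for q
  have hsum : (∑' j : ℕ, (j : ℝ≥0∞) * q j) = ENNReal.ofReal m₁ := by
    rw [← hm₁.tsum_eq, ENNReal.ofReal_tsum_of_nonneg (fun j => by positivity) hm₁.summable]
    congr 1; funext j
    rw [ENNReal.ofReal_mul (by positivity), ENNReal.ofReal_natCast,
      ENNReal.ofReal_coe_nnreal]
  set creal : ℝ := (k : ℝ)⁻¹ * (a / k) * m₁ with hcreal
  have hcreal_nonneg : 0 ≤ creal := by positivity
  set D : ℝ≥0∞ := ENNReal.ofReal creal with hD
  -- one-step inequality
  have hstep : ∀ n, L (n + 1) ≤ (1 + D) * L n := by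
    intro n
    set C : ℝ≥0∞ := ENNReal.ofNNReal ((k : ℝ≥0)⁻¹) with hC
    have hmη : Measurable fun ω => (η k n ω : ℝ≥0∞) := (hηmeas k n).coe_nnreal_ennreal
    have hmZ : Measurable fun ω => (Z k n ω : ℝ≥0∞) := (hZmeas k n).coe_nnreal_ennreal
    have hmY : Measurable fun ω => (Y k n ω : ℝ≥0∞) := (hYmeas k n).coe_nnreal_ennreal
    have hpt : ∀ ω, (Y k (n + 1) ω : ℝ≥0∞)
        ≤ (Y k n ω : ℝ≥0∞) + C * ((η k n ω : ℝ≥0∞) * (Z k n ω : ℝ≥0∞)) := by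
      intro ω
      rw [hrec k n ω]
      calc ((Y k n ω + (k : ℝ≥0)⁻¹ * η k n ω * Z k n ω - (k : ℝ≥0)⁻¹ : ℝ≥0) : ℝ≥0∞)
          ≤ ((Y k n ω + (k : ℝ≥0)⁻¹ * η k n ω * Z k n ω : ℝ≥0) : ℝ≥0∞) :=
            ENNReal.coe_le_coe.2 tsub_le_self
        _ = (Y k n ω : ℝ≥0∞) + C * ((η k n ω : ℝ≥0∞) * (Z k n ω : ℝ≥0∞)) := by
            push_cast; ring
    have hEη : ∫⁻ ω, (η k n ω : ℝ≥0∞) ∂P = ENNReal.ofReal (a / k) := by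
      have hset : MeasurableSet {ω | η k n ω = 1} := hηmeas k n (measurableSet_singleton 1)
      have : ∀ ω, (η k n ω : ℝ≥0∞)
          = Set.indicator {ω | η k n ω = 1} (fun _ => (1 : ℝ≥0∞)) ω := by
        intro ω
        rcases hη01 k n ω with h | h
        · rw [Set.indicator_of_notMem (by simp [Set.mem_setOf_eq, h]), h]; simp
        · rw [Set.indicator_of_mem (by simpa [Set.mem_setOf_eq] using h), h]; simp
      simp_rw [this]
      rw [lintegral_indicator hset, setLIntegral_one]
      exact hηlaw k n hk
    have hEZ : ∫⁻ ω, (Z k n ω : ℝ≥0∞) ∂P = ENNReal.ofReal m₁ * L n := by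
      have hprob : IsProbabilityMeasure (P.map (Y k n)) :=
        Measure.isProbabilityMeasure_map (hYmeas k n).aemeasurable
      rw [← lintegral_map measurable_coe_nnreal_ennreal (hZmeas k n), hZlaw k n,
        lint_qMix, hsum, lintegral_map measurable_coe_nnreal_ennreal (hYmeas k n)]
    have hEηZ : ∫⁻ ω, (η k n ω : ℝ≥0∞) * (Z k n ω : ℝ≥0∞) ∂P
        = ENNReal.ofReal (a / k) * (ENNReal.ofReal m₁ * L n) := by
      have hind : IndepFun (fun ω => (η k n ω : ℝ≥0∞)) (fun ω => (Z k n ω : ℝ≥0∞)) P :=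
        (hηZ k n).comp measurable_coe_nnreal_ennreal measurable_coe_nnreal_ennreal
      have := lintegral_mul_eq_lintegral_mul_lintegral_of_indepFun hmη hmZ hind
      simp only [Pi.mul_apply] at this
      rw [this, hEη, hEZ]
    have hCD : C * (ENNReal.ofReal (a / k) * ENNReal.ofReal m₁) = D := by
      have hk0 : (k : ℝ≥0) ≠ 0 := Nat.cast_ne_zero.2 (by omega)
      have hCo : C = ENNReal.ofReal ((k : ℝ)⁻¹) := by
        rw [ENNReal.ofReal_inv_of_pos hkpos, ENNReal.ofReal_natCast, hC,
          ENNReal.coe_inv hk0, ENNReal.coe_natCast]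
      rw [hCo, ← ENNReal.ofReal_mul (by positivity), ← ENNReal.ofReal_mul (by positivity),
        hD, hcreal, mul_assoc]
    calc L (n + 1) ≤ ∫⁻ ω, ((Y k n ω : ℝ≥0∞)
          + C * ((η k n ω : ℝ≥0∞) * (Z k n ω : ℝ≥0∞))) ∂P := lintegral_mono hpt
      _ = L n + C * ∫⁻ ω, (η k n ω : ℝ≥0∞) * (Z k n ω : ℝ≥0∞) ∂P := by
          rw [lintegral_add_left hmY, lintegral_const_mul (f := fun ω => (η k n ω : ℝ≥0∞) * (Z k n ω : ℝ≥0∞)) _ (hmη.mul hmZ)]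
      _ = L n + D * L n := by rw [hEηZ, ← hCD]; ring
      _ = (1 + D) * L n := by ring
  -- iterate
  have hiter : ∀ n, L n ≤ (1 + D) ^ n * L 0 := by
    intro n
    induction n with
    | zero => simp
    | succ n ih =>
        calc L (n + 1) ≤ (1 + D) * L n := hstep n
          _ ≤ (1 + D) * ((1 + D) ^ n * L 0) := by gcongr
          _ = (1 + D) ^ (n + 1) * L 0 := by ring
  set N : ℕ := Nat.floor ((k : ℝ) * t) with hN
  -- bound the constant
  have hpow : (1 + D) ^ N ≤ ENNReal.ofReal (Real.exp (a * m₁ * t)) := by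
    have h1 : (1 + D) = ENNReal.ofReal (1 + creal) := by
      rw [hD, ENNReal.ofReal_add one_pos.le hcreal_nonneg, ENNReal.ofReal_one]
    have h2 : (1 : ℝ) + creal ≤ Real.exp creal := by
      have := Real.add_one_le_exp creal; linarith
    have h3 : (1 + D) ^ N ≤ ENNReal.ofReal (Real.exp creal ^ N) := by
      rw [h1, ← ENNReal.ofReal_pow (by positivity)]
      exact ENNReal.ofReal_le_ofReal (pow_le_pow_left₀ (by positivity) h2 N)
    refine h3.trans (ENNReal.ofReal_le_ofReal ?_)
    rw [← Real.exp_nat_mul]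
    apply Real.exp_le_exp.2
    have hNle : (N : ℝ) ≤ (k : ℝ) * t := Nat.floor_le (by positivity)
    have step1 : (N : ℝ) * creal ≤ ((k : ℝ) * t) * creal :=
      mul_le_mul_of_nonneg_right hNle hcreal_nonneg
    refine step1.trans ?_
    have : ((k : ℝ) * t) * creal = (a * m₁ * t) / k := by
      rw [hcreal]; field_simp
    rw [this]
    exact div_le_self (by positivity) hkR
  -- finiteness of L 0
  have hintY0 : Integrable (fun ω => (Y k 0 ω : ℝ)) P := by
    have hsq : Integrable (fun ω => ((Y k 0 ω : ℝ)) ^ 2 + 1) P :=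
      (hint k).add (integrable_const 1)
    refine hsq.mono' ((hYmeas k 0).coe_nnreal_real.aestronglyMeasurable) ?_
    refine ae_of_all _ fun ω => ?_
    have h0 : (0 : ℝ) ≤ (Y k 0 ω : ℝ) := (Y k 0 ω).coe_nonneg
    rw [Real.norm_of_nonneg h0]
    nlinarith [sq_nonneg ((Y k 0 ω : ℝ) - 1)]
  have hL0 : L 0 ≠ ⊤ := by
    have hfi := hintY0.2
    rw [hasFiniteIntegral_def] at hfi
    have : ∀ ω, ‖(Y k 0 ω : ℝ)‖ₑ = (Y k 0 ω : ℝ≥0∞) := by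
      intro ω
      rw [Real.enorm_of_nonneg (Y k 0 ω).coe_nonneg, ENNReal.ofReal_coe_nnreal]
    simp_rw [this] at hfi
    exact hfi.ne
  -- convert Bochner integrals to lintegrals
  have hE : ∀ n, ∫ ω, (Y k n ω : ℝ) ∂P = (L n).toReal := by
    intro n
    rw [integral_eq_lintegral_of_nonneg_ae (ae_of_all _ fun ω => (Y k n ω).coe_nonneg)
      ((hYmeas k n).coe_nnreal_real.aestronglyMeasurable)]
    simp_rw [ENNReal.ofReal_coe_nnreal]
    rfl
  rw [hE, hE]
  have hfin : ENNReal.ofReal (Real.exp (a * m₁ * t)) * L 0 ≠ ⊤ :=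
    ENNReal.mul_ne_top ENNReal.ofReal_ne_top hL0
  have hmain : L N ≤ ENNReal.ofReal (Real.exp (a * m₁ * t)) * L 0 :=
    (hiter N).trans (by gcongr)
  calc (L N).toReal ≤ (ENNReal.ofReal (Real.exp (a * m₁ * t)) * L 0).toReal :=
        ENNReal.toReal_mono hfin hmain
    _ = Real.exp (a * m₁ * t) * (L 0).toReal := by
        rw [ENNReal.toReal_mul, ENNReal.toReal_ofReal (Real.exp_nonneg _)]
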